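/- Let X = Y ⊕ Z be an orthogonal decomposition of an N-dimensional Euclidean space with dim Y = n, let M ⊂ Y be convex compact and A ⊂ X convex compact. Then vol_N(A + εM) = ε^n · vol_{N−n}(Pr_Z A) · vol_n(M) + O(ε^{n−1}) as ε → ∞; equivalently, the coefficient of ε^n in the polynomial expansion of vol_N(A + εM) equals vol_{N−n}(Pr_Z A) · vol_n(M). -/

import Mathlib

open Pointwise MeasureTheory

def IsBody {E : Type*} [NormedAddCommGroup E] [NormedSpace ℝ E] (K : Set E) : Prop :=
  Convex ℝ K ∧ IsCompact K ∧ K.Nonempty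

open Filter Set Metric Topology Polynomial Asymptotics


lemma coeff_eq_of_tendsto_div_pow {P : Polynomial ℝ} {n : ℕ} {L : ℝ}
    (h : Tendsto (fun x : ℝ => P.eval x / x ^ n) atTop (𝓝 L)) : P.coeff n = L := by
  by_cases hP0 : P = 0
  · subst hP0
    have h0 : Tendsto (fun x : ℝ => eval x (0 : Polynomial ℝ) / x ^ n) atTop (𝓝 0) := by
      simpa using tendsto_const_nhds
    simp [← tendsto_nhds_unique h0 h]
  · have hlc : P.leadingCoeff ≠ 0 := leadingCoeff_ne_zero.mpr hP0
    have hequiv : (fun x : ℝ => P.eval x / x ^ n) ~[atTop]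
        (fun x : ℝ => P.leadingCoeff * x ^ P.natDegree / x ^ n) :=
      (Polynomial.isEquivalent_atTop_lead P).div (IsEquivalent.refl)
    rcases lt_trichotomy P.natDegree n with hd | hd | hd
    · -- degree < n : coeff = 0 and limit is 0
      have hc : P.coeff n = 0 := coeff_eq_zero_of_natDegree_lt hd
      obtain ⟨k, hk⟩ : ∃ k, n = P.natDegree + (k + 1) :=
        ⟨n - P.natDegree - 1, by omega⟩
      have hv : Tendsto (fun x : ℝ => P.leadingCoeff * x ^ P.natDegree / x ^ n)
          atTop (𝓝 0) := by
        have hev : ∀ᶠ x : ℝ in atTop,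
            P.leadingCoeff / x ^ (k+1) = P.leadingCoeff * x ^ P.natDegree / x ^ n := by
          filter_upwards [eventually_gt_atTop (0:ℝ)] with x hx
          rw [hk, pow_add]
          field_simp
          ring
        refine Tendsto.congr' hev ?_
        exact Tendsto.div_atTop tendsto_const_nhds (tendsto_pow_atTop (Nat.succ_ne_zero k))
      have := hequiv.symm.tendsto_nhds hv
      rw [hc, tendsto_nhds_unique h this]
    · -- degree = n : limit is leadingCoeff
      have hv : Tendsto (fun x : ℝ => P.leadingCoeff * x ^ P.natDegree / x ^ n)
          atTop (𝓝 P.leadingCoeff) := by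
        have hev : ∀ᶠ x : ℝ in atTop,
            P.leadingCoeff = P.leadingCoeff * x ^ P.natDegree / x ^ n := by
          filter_upwards [eventually_gt_atTop (0:ℝ)] with x hx
          rw [hd]
          field_simp
        exact Tendsto.congr' hev tendsto_const_nhds
      have := hequiv.symm.tendsto_nhds hv
      have hL : P.leadingCoeff = L := tendsto_nhds_unique this h
      rw [← hd, ← hL]; rfl
    · -- degree > n : contradiction
      exfalso
      have hv : Tendsto (fun x : ℝ => P.leadingCoeff * x ^ P.natDegree / x ^ n)
          atTop (𝓝 L) := hequiv.tendsto_nhds h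
      obtain ⟨k, hk⟩ : ∃ k, P.natDegree = n + (k + 1) := ⟨P.natDegree - n - 1, by omega⟩
      have habs : Tendsto (fun x : ℝ => |P.leadingCoeff * x ^ P.natDegree / x ^ n|)
          atTop atTop := by
        have hev : ∀ᶠ x : ℝ in atTop,
            |P.leadingCoeff| * x ^ (k+1) = |P.leadingCoeff * x ^ P.natDegree / x ^ n| := by
          filter_upwards [eventually_gt_atTop (0:ℝ)] with x hx
          rw [hk, abs_div, abs_mul, abs_pow, abs_of_pos hx, abs_of_pos (pow_pos hx n),
            pow_add]
          field_simp
          ring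
        refine Tendsto.congr' hev ?_
        exact (tendsto_pow_atTop (Nat.succ_ne_zero k)).const_mul_atTop (abs_pos.mpr hlc)
      exact not_tendsto_atTop_of_tendsto_nhds hv.abs habs


lemma slice_minkowski {n m : ℕ} (A : Set (EuclideanSpace ℝ (Fin n) × EuclideanSpace ℝ (Fin m)))
    (M : Set (EuclideanSpace ℝ (Fin n))) (ε : ℝ) (z : EuclideanSpace ℝ (Fin m)) :
    (fun y => (y, z)) ⁻¹' (A + ε • (M ×ˢ ({0} : Set (EuclideanSpace ℝ (Fin m))))) =
      ((fun y => (y, z)) ⁻¹' A) + ε • M := by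
  ext y
  constructor
  · rintro ⟨a, ha, t, ⟨q, hq, rfl⟩, hsum⟩
    have hz : a.2 = z := by
      have h2 := congrArg Prod.snd hsum
      simp only [Prod.snd_add, Prod.smul_snd] at h2
      rw [hq.2, smul_zero, add_zero] at h2
      exact h2
    refine ⟨a.1, ?_, ε • q.1, ⟨q.1, hq.1, rfl⟩, ?_⟩
    · show (a.1, z) ∈ A
      rw [← hz]
      exact ha
    · have h1 := congrArg Prod.fst hsum
      simpa using h1
  · rintro ⟨u, hu, t, ⟨w, hw, rfl⟩, hsum⟩
    refine ⟨(u, z), hu, ε • (w, 0), ⟨(w, 0), ⟨hw, rfl⟩, rfl⟩, ?_⟩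
    ext i
    · simpa using congrArg (fun v : EuclideanSpace ℝ (Fin n) => v i) hsum
    · simp

lemma minkowski_volume_bounds {n m : ℕ}
    {M : Set (EuclideanSpace ℝ (Fin n))} (hMc : IsCompact M)
    {A : Set (EuclideanSpace ℝ (Fin n) × EuclideanSpace ℝ (Fin m))} (hAc : IsCompact A)
    {R : ℝ} (hR0 : 0 ≤ R) (hAR : A ⊆ closedBall 0 R) {ε : ℝ} (hε : 0 < ε) :
    ENNReal.ofReal (ε ^ n) * (volume (Prod.snd '' A) * volume M)
      ≤ volume (A + ε • (M ×ˢ ({0} : Set (EuclideanSpace ℝ (Fin m))))) ∧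
    volume (A + ε • (M ×ˢ ({0} : Set (EuclideanSpace ℝ (Fin m)))))
      ≤ ENNReal.ofReal (ε ^ n) *
        (volume (Prod.snd '' A) * volume (M + closedBall 0 (R / ε))) := by
  set S := A + ε • (M ×ˢ ({0} : Set (EuclideanSpace ℝ (Fin m)))) with hS
  have hScompact : IsCompact S := hAc.add ((hMc.prod isCompact_singleton).smul ε)
  have hSm : MeasurableSet S := hScompact.measurableSet
  have hprojm : MeasurableSet (Prod.snd '' A) :=
    (hAc.image continuous_snd).measurableSet
  have key : volume S = ∫⁻ z, volume ((fun y => (y, z)) ⁻¹' S) := by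
    rw [MeasureTheory.Measure.volume_eq_prod, Measure.prod_apply_symm hSm]
  -- lower bound pointwise
  have hlow : ∀ z, (Prod.snd '' A).indicator
      (fun _ => ENNReal.ofReal (ε ^ n) * volume M) z ≤ volume ((fun y => (y, z)) ⁻¹' S) := by
    intro z
    by_cases hz : z ∈ Prod.snd '' A
    · rw [indicator_of_mem hz]
      obtain ⟨a, ha, rfl⟩ := hz
      rw [hS, slice_minkowski]
      have hsub : a.1 +ᵥ (ε • M) ⊆ ((fun y => (y, a.2)) ⁻¹' A) + ε • M := by
        rintro x ⟨w, hw, rfl⟩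
        exact ⟨a.1, by simpa using ha, w, hw, rfl⟩
      calc ENNReal.ofReal (ε ^ n) * volume M
          = volume (ε • M) := by
            rw [Measure.addHaar_smul_of_nonneg _ hε.le, finrank_euclideanSpace_fin]
        _ = volume (a.1 +ᵥ (ε • M)) := (measure_vadd _ _ _).symm
        _ ≤ _ := measure_mono hsub
    · rw [indicator_of_notMem hz]
      exact zero_le
  -- upper bound pointwise
  have hup : ∀ z, volume ((fun y => (y, z)) ⁻¹' S) ≤ (Prod.snd '' A).indicator
      (fun _ => ENNReal.ofReal (ε ^ n) * volume (M + closedBall 0 (R / ε))) z := by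
    intro z
    by_cases hz : z ∈ Prod.snd '' A
    · rw [indicator_of_mem hz]
      rw [hS, slice_minkowski]
      have hsub : ((fun y => (y, z)) ⁻¹' A) + ε • M ⊆ ε • (M + closedBall 0 (R / ε)) := by
        rintro x ⟨u, hu, t, ⟨w, hw, rfl⟩, rfl⟩
        rw [smul_add]
        refine ⟨ε • w, ⟨w, hw, rfl⟩, u, ?_, add_comm (ε • w) u⟩
        have hnu : ‖u‖ ≤ R := by
          have := hAR hu
          rw [mem_closedBall_zero_iff] at this
          calc ‖u‖ ≤ ‖((u, z) : EuclideanSpace ℝ (Fin n) × EuclideanSpace ℝ (Fin m))‖ :=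
                norm_fst_le ((u, z) : EuclideanSpace ℝ (Fin n) × EuclideanSpace ℝ (Fin m))
            _ ≤ R := this
        have : u ∈ closedBall (0 : EuclideanSpace ℝ (Fin n)) R := by
          rwa [mem_closedBall_zero_iff]
        have hball : ε • closedBall (0 : EuclideanSpace ℝ (Fin n)) (R / ε)
            = closedBall 0 R := by
          rw [smul_closedBall _ _ (div_nonneg hR0 hε.le), smul_zero]
          congr 1
          rw [Real.norm_of_nonneg hε.le]
          field_simp
        rw [← hball] at this
        exact this
      calc volume (((fun y => (y, z)) ⁻¹' A) + ε • M)
          ≤ volume (ε • (M + closedBall 0 (R / ε))) := measure_mono hsub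
        _ = ENNReal.ofReal (ε ^ n) * volume (M + closedBall 0 (R / ε)) := by
            rw [Measure.addHaar_smul_of_nonneg _ hε.le, finrank_euclideanSpace_fin]
    · rw [indicator_of_notMem hz]
      have hempty : (fun y => (y, z)) ⁻¹' S = ∅ := by
        rw [hS, slice_minkowski]
        have : ((fun y => (y, z)) ⁻¹' A) = ∅ := by
          ext u
          simp only [mem_preimage, mem_empty_iff_false, iff_false]
          intro hu
          exact hz ⟨(u, z), hu, rfl⟩
        rw [this, empty_add]
      rw [hempty, measure_empty]
  constructor
  · calc ENNReal.ofReal (ε ^ n) * (volume (Prod.snd '' A) * volume M)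
        = ∫⁻ z, (Prod.snd '' A).indicator (fun _ => ENNReal.ofReal (ε ^ n) * volume M) z := by
          rw [lintegral_indicator hprojm, setLIntegral_const]
          ring
      _ ≤ ∫⁻ z, volume ((fun y => (y, z)) ⁻¹' S) := lintegral_mono hlow
      _ = volume S := key.symm
  · calc volume S = ∫⁻ z, volume ((fun y => (y, z)) ⁻¹' S) := key
      _ ≤ ∫⁻ z, (Prod.snd '' A).indicator
          (fun _ => ENNReal.ofReal (ε ^ n) * volume (M + closedBall 0 (R / ε))) z :=
          lintegral_mono hup
      _ = ENNReal.ofReal (ε ^ n) *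
          (volume (Prod.snd '' A) * volume (M + closedBall 0 (R / ε))) := by
          rw [lintegral_indicator hprojm, setLIntegral_const]
          ring

/-- For an orthogonal decomposition `X = Y ⊕ Z` (modelled as
`X = Y × Z`, `Y = ℝ^n`, `Z = ℝ^{N-n}`, orthogonal projection onto `Z` = `Prod.snd`),
`M ⊂ Y` convex compact and `A ⊂ X` convex compact, the coefficient of `ε^n` in the
polynomial expansion of `vol_N(A + εM)` equals `vol_{N-n}(Pr_Z A) · vol_n(M)`. -/
theorem steiner_coefficient_of_subspace_body (n m : ℕ)
    (M : Set (EuclideanSpace ℝ (Fin n))) (hM : IsBody M)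
    (A : Set (EuclideanSpace ℝ (Fin n) × EuclideanSpace ℝ (Fin m))) (hA : IsBody A)
    (P : Polynomial ℝ)
    (hP : ∀ ε : ℝ, 0 ≤ ε →
      (volume (A + ε • (M ×ˢ ({0} : Set (EuclideanSpace ℝ (Fin m)))))).toReal
        = P.eval ε) :
    P.coeff n = (volume (Prod.snd '' A)).toReal * (volume M).toReal := by
  obtain ⟨-, hAc, hAne⟩ := hA
  obtain ⟨-, hMc, -⟩ := hM
  obtain ⟨R', hR'⟩ := hAc.isBounded.subset_closedBall 0
  set R := max R' 0 with hRdef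
  have hR0 : 0 ≤ R := le_max_right _ _
  have hAR : A ⊆ closedBall 0 R := hR'.trans (closedBall_subset_closedBall (le_max_left _ _))
  have hvA : volume (Prod.snd '' A) ≠ ⊤ := (hAc.image continuous_snd).measure_lt_top.ne
  have hvM : volume M ≠ ⊤ := hMc.measure_lt_top.ne
  have hvMδ : ∀ δ : ℝ, volume (M + closedBall 0 δ) ≠ ⊤ := fun δ =>
    (hMc.add (isCompact_closedBall 0 δ)).measure_lt_top.ne
  -- real-valued bounds for ε > 0
  have hbounds : ∀ ε : ℝ, 0 < ε →
      ε ^ n * ((volume (Prod.snd '' A)).toReal * (volume M).toReal) ≤ P.eval ε ∧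
      P.eval ε ≤ ε ^ n * ((volume (Prod.snd '' A)).toReal *
        (volume (M + closedBall 0 (R / ε))).toReal) := by
    intro ε hε
    obtain ⟨h1, h2⟩ := minkowski_volume_bounds hMc hAc hR0 hAR hε
    have hεn : (0:ℝ) ≤ ε ^ n := pow_nonneg hε.le n
    have hSfin : volume (A + ε • (M ×ˢ ({0} : Set (EuclideanSpace ℝ (Fin m))))) ≠ ⊤ :=
      (hAc.add ((hMc.prod isCompact_singleton).smul ε)).measure_lt_top.ne
    rw [← hP ε hε.le]
    constructor
    · have := ENNReal.toReal_mono hSfin h1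
      rwa [ENNReal.toReal_mul, ENNReal.toReal_mul, ENNReal.toReal_ofReal hεn] at this
    · have hfin : ENNReal.ofReal (ε ^ n) *
          (volume (Prod.snd '' A) * volume (M + closedBall 0 (R / ε))) ≠ ⊤ :=
        ENNReal.mul_ne_top ENNReal.ofReal_ne_top (ENNReal.mul_ne_top hvA (hvMδ _))
      have := ENNReal.toReal_mono hfin h2
      rwa [ENNReal.toReal_mul, ENNReal.toReal_mul, ENNReal.toReal_ofReal hεn] at this
  -- the squeeze
  have htend : Tendsto (fun ε : ℝ => P.eval ε / ε ^ n) atTop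
      (𝓝 ((volume (Prod.snd '' A)).toReal * (volume M).toReal)) := by
    have hupper : Tendsto (fun ε : ℝ => (volume (Prod.snd '' A)).toReal *
        (volume (M + closedBall 0 (R / ε))).toReal) atTop
        (𝓝 ((volume (Prod.snd '' A)).toReal * (volume M).toReal)) := by
      have h1 : Tendsto (fun ε : ℝ => R / ε) atTop (𝓝 0) :=
        tendsto_const_nhds.div_atTop tendsto_id
      have h2 : Tendsto (fun δ : ℝ => volume (cthickening δ M)) (𝓝 0) (𝓝 (volume M)) :=
        tendsto_measure_cthickening_of_isCompact hMc
      have h3 : Tendsto (fun ε : ℝ => volume (cthickening (R / ε) M)) atTop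
          (𝓝 (volume M)) := h2.comp h1
      have h4 : Tendsto (fun ε : ℝ => (volume (cthickening (R / ε) M)).toReal) atTop
          (𝓝 (volume M).toReal) := (ENNReal.tendsto_toReal hvM).comp h3
      have h5 : (fun ε : ℝ => (volume (M + closedBall 0 (R / ε))).toReal)
          =ᶠ[atTop] (fun ε : ℝ => (volume (cthickening (R / ε) M)).toReal) := by
        filter_upwards [eventually_gt_atTop (0:ℝ)] with ε hε
        rw [hMc.add_closedBall_zero (div_nonneg hR0 hε.le)]
      exact (Tendsto.congr' h5.symm h4).const_mul _
    refine tendsto_of_tendsto_of_tendsto_of_le_of_le' tendsto_const_nhds hupper ?_ ?_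
    · filter_upwards [eventually_gt_atTop (0:ℝ)] with ε hε
      have := (hbounds ε hε).1
      rw [le_div_iff₀ (pow_pos hε n)]
      linarith [this]
    · filter_upwards [eventually_gt_atTop (0:ℝ)] with ε hε
      have := (hbounds ε hε).2
      rw [div_le_iff₀ (pow_pos hε n)]
      linarith [this]
  exact coeff_eq_of_tendsto_div_pow htend
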